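/- Define S_2(n) = q^{-n} * sum over all integers k of q^{3k^2 + k - 3kn} * [n choose 3k+1-n]_q and S_3(n) = sum over all integers k of q^{3k^2 - k - 3kn} * [n choose 3k-1-n]_q, where the q-binomial [n choose r]_q is zero if r < 0 or r > n. Then S_2(n) = S_3(n) for every nonnegative integer n. -/

import Mathlib

/-- Gaussian binomial coefficient `[n choose r]_q`, defined via the q-Pascal
recurrence, with the convention that it is `0` when `r < 0` or `r > n`. -/
def qbinom {K : Type*} [CommRing K] (q : K) : ℕ → ℤ → K
  | 0, r => if r = 0 then 1 else 0
  | n + 1, r => q ^ r.toNat * qbinom q n r + qbinom q n (r - 1)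

lemma qbinom_neg {K : Type*} [CommRing K] (q : K) : ∀ (n : ℕ) (r : ℤ), r < 0 → qbinom q n r = 0
  | 0, r, hr => by simp [qbinom, hr.ne]
  | n + 1, r, hr => by
    rw [qbinom, qbinom_neg q n r hr, qbinom_neg q n (r - 1) (by omega)]
    ring

lemma qbinom_gt {K : Type*} [CommRing K] (q : K) :
    ∀ (n : ℕ) (r : ℤ), (n : ℤ) < r → qbinom q n r = 0
  | 0, r, hr => by simp [qbinom]; omega
  | n + 1, r, hr => by
    rw [qbinom, qbinom_gt q n r (by omega), qbinom_gt q n (r - 1) (by omega)]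
    ring

lemma qbinom_dual {K : Type*} [CommRing K] (q : K) :
    ∀ (n : ℕ) (r : ℤ), qbinom q (n + 1) r =
      qbinom q n r + q ^ ((n : ℤ) + 1 - r).toNat * qbinom q n (r - 1)
  | 0, r => by
    rcases eq_or_ne r 0 with h | h
    · subst h; simp [qbinom]
    rcases eq_or_ne r 1 with h1 | h1
    · subst h1; simp [qbinom]
    · simp [qbinom, h, h1, sub_eq_zero, show ¬ r - 1 = 0 by omega]
  | n + 1, r => by
    conv_lhs => rw [show qbinom q (n + 1 + 1) r
        = q ^ r.toNat * qbinom q (n + 1) r + qbinom q (n + 1) (r - 1) from rfl,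
      qbinom_dual q n r, qbinom_dual q n (r - 1)]
    conv_rhs => rw [show qbinom q (n + 1) r
        = q ^ r.toNat * qbinom q n r + qbinom q n (r - 1) from rfl,
      show qbinom q (n + 1) (r - 1)
        = q ^ (r - 1).toNat * qbinom q n (r - 1) + qbinom q n (r - 1 - 1) from rfl]
    rw [show ((↑(n + 1) : ℤ) + 1 - r) = (n : ℤ) + 2 - r from by push_cast; ring,
      show ((n : ℤ) + 1 - (r - 1)) = (n : ℤ) + 2 - r from by ring]
    rcases le_or_gt r 0 with h | h
    · rw [qbinom_neg q n (r - 1) (by omega), qbinom_neg q n (r - 1 - 1) (by omega)]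
      ring
    rcases le_or_gt r ((n : ℤ) + 1) with h3 | h3
    · have e1 : r.toNat + ((n : ℤ) + 1 - r).toNat = n + 1 := by omega
      have e2 : ((n : ℤ) + 2 - r).toNat + (r - 1).toNat = n + 1 := by omega
      have key : q ^ r.toNat * q ^ ((n : ℤ) + 1 - r).toNat
          = q ^ ((n : ℤ) + 2 - r).toNat * q ^ (r - 1).toNat := by
        rw [← pow_add, ← pow_add, e1, e2]
      linear_combination (qbinom q n (r - 1)) * key
    · rw [qbinom_gt q n r (by omega), qbinom_gt q n (r - 1) (by omega)]
      ring

lemma qbinom_symm {K : Type*} [CommRing K] (q : K) :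
    ∀ (n : ℕ) (r : ℤ), qbinom q n ((n : ℤ) - r) = qbinom q n r
  | 0, r => by
    simp only [qbinom, Nat.cast_zero, zero_sub, neg_eq_zero]
  | n + 1, r => by
    rw [qbinom_dual, show qbinom q (n + 1) r
        = q ^ r.toNat * qbinom q n r + qbinom q n (r - 1) from rfl]
    push_cast
    rw [show ((n : ℤ) + 1 - r - 1) = (n : ℤ) - r from by ring,
      show ((n : ℤ) + 1 - r) = (n : ℤ) - (r - 1) from by ring,
      qbinom_symm q n r, qbinom_symm q n (r - 1),
      show ((n : ℤ) + 1 - ((n : ℤ) - (r - 1))) = r from by ring]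
    ring

theorem stmt_2 {K : Type*} [Field K] (q : K) (hq : q ≠ 0) (n : ℕ) :
    q ^ (-(n : ℤ)) *
      ∑ᶠ k : ℤ, q ^ (3 * k ^ 2 + k - 3 * k * n) * qbinom q n (3 * k + 1 - n) =
      ∑ᶠ k : ℤ, q ^ (3 * k ^ 2 - k - 3 * k * n) * qbinom q n (3 * k - 1 - n) := by
  have hfin : (Function.support fun k : ℤ =>
      q ^ (3 * k ^ 2 + k - 3 * k * n) * qbinom q n (3 * k + 1 - n)).Finite := by
    apply Set.Finite.subset (Set.finite_Icc (-1 : ℤ) (n : ℤ))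
    intro k hk
    simp only [Function.mem_support] at hk
    by_contra hk2
    simp only [Set.mem_Icc, not_and_or, not_le] at hk2
    rcases hk2 with h | h
    · exact hk (by rw [qbinom_neg q n _ (by omega), mul_zero])
    · exact hk (by rw [qbinom_gt q n _ (by omega), mul_zero])
  rw [mul_finsum _ _]
  apply finsum_eq_of_bijective (fun k : ℤ => (n : ℤ) - k)
  · constructor
    · intro a b h; dsimp at h; omega
    · intro b; exact ⟨(n : ℤ) - b, by ring⟩
  · intro k
    have hb : qbinom q n (3 * ((n : ℤ) - k) - 1 - n) = qbinom q n (3 * k + 1 - n) := by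
      rw [show (3 * ((n : ℤ) - k) - 1 - n : ℤ) = (n : ℤ) - (3 * k + 1 - n) by ring]
      exact qbinom_symm q n _
    rw [hb, ← mul_assoc, ← zpow_add₀ hq]
    congr 2
    ring
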